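/- Let q ≥ 2 be a prime power, p the characteristic of F_q with p > 2, and n ≥ 3 an integer. Suppose a is an integer with 0 ≤ a ≤ q − 1 and there exist integers β, γ with 0 ≤ β, γ ≤ n − 1 such that (q − 1)a ≡ q^β − q^γ (mod (q^n − 1)/(q − 1)). Then a = 0 or a = 1. -/

import Mathlib

/-- If `q = p^m` is a power of an odd prime, `n ≥ 3`, `0 ≤ a ≤ q - 1` and
`(q - 1)a ≡ q^β - q^γ (mod (q^n - 1)/(q - 1))` for some `0 ≤ β, γ ≤ n - 1`, then `a ∈ {0, 1}`.
(Here `(q^n - 1)/(q - 1) = 1 + q + ⋯ + q^{n-1}`.) -/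
theorem stmt12 (p m n q : ℕ) (hp : p.Prime) (hp2 : 2 < p) (hm : 0 < m) (hq : q = p ^ m)
    (hn : 3 ≤ n) (a : ℕ) (ha : a ≤ q - 1)
    (β γ : ℕ) (hβ : β ≤ n - 1) (hγ : γ ≤ n - 1)
    (hcong : ((q : ℤ) - 1) * a ≡ (q : ℤ) ^ β - (q : ℤ) ^ γ
      [ZMOD (∑ j ∈ Finset.range n, (q : ℤ) ^ j)]) :
    a = 0 ∨ a = 1 := by
  have hq3 : 3 ≤ q := by
    have h1 : p ≤ p ^ m := Nat.le_self_pow hm.ne' p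
    omega
  have hqodd : Odd q := by
    rw [hq]; exact (hp.odd_of_ne_two (by omega)).pow
  set Q : ℤ := (q : ℤ) with hQ
  have hQ3 : (3 : ℤ) ≤ Q := by rw [hQ]; exact_mod_cast hq3
  set N : ℤ := ∑ j ∈ Finset.range n, Q ^ j with hN
  -- basic inequalities
  have hpow_le : ∀ i j : ℕ, i ≤ j → Q ^ i ≤ Q ^ j := fun i j hij =>
    pow_le_pow_right₀ (by linarith) hij
  have hpow_pos : ∀ i : ℕ, (0 : ℤ) < Q ^ i := fun i => by positivity
  have hone : ∀ i : ℕ, (1 : ℤ) ≤ Q ^ i := fun i => by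
    have := hpow_le 0 i (Nat.zero_le i); simpa using this
  have hsum3 : ∀ k : ℕ, 3 ≤ k → 1 + Q + Q ^ 2 ≤ ∑ j ∈ Finset.range k, Q ^ j := by
    intro k hk
    have h := Finset.sum_le_sum_of_subset_of_nonneg
      (Finset.range_subset_range.mpr hk) (fun i _ _ => (hpow_pos i).le)
    simpa [Finset.sum_range_succ] using h
  have hNsplit : N = (∑ j ∈ Finset.range (n - 1), Q ^ j) + Q ^ (n - 1) := by
    rw [hN, show n = n - 1 + 1 from by omega, Nat.add_sub_cancel, Finset.sum_range_succ]
  have hsum_pos : (1 : ℤ) ≤ ∑ j ∈ Finset.range (n - 1), Q ^ j := by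
    have h := Finset.sum_le_sum_of_subset_of_nonneg
      (Finset.range_subset_range.mpr (by omega : 1 ≤ n - 1)) (fun i _ _ => (hpow_pos i).le)
    simpa using h
  have hN3 : 1 + Q + Q ^ 2 ≤ N := hsum3 n hn
  have hNgt : Q ^ (n - 1) + 1 ≤ N := by rw [hNsplit]; linarith
  have hNpos : 0 < N := by linarith [hone 2, hN3]
  have hβle : Q ^ β ≤ Q ^ (n - 1) := hpow_le _ _ hβ
  have hγle : Q ^ γ ≤ Q ^ (n - 1) := hpow_le _ _ hγ
  have haz : (a : ℤ) ≤ Q - 1 := by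
    have h1 : a + 1 ≤ q := by omega
    have h2 := (Nat.cast_le (α := ℤ)).mpr h1
    push_cast at h2
    rw [hQ]; linarith
  have hAnn : (0 : ℤ) ≤ (Q - 1) * a :=
    mul_nonneg (by linarith) (Int.natCast_nonneg a)
  have hAle : (Q - 1) * a ≤ (Q - 1) ^ 2 := by
    have := mul_le_mul_of_nonneg_left haz (by linarith : (0:ℤ) ≤ Q - 1)
    nlinarith
  have hsq : (Q - 1) ^ 2 < N := by
    have h : (Q - 1) ^ 2 = Q ^ 2 - 2 * Q + 1 := by ring
    linarith
  -- the divisibility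
  obtain ⟨k, hk⟩ : N ∣ (Q ^ β - Q ^ γ) - (Q - 1) * a := hcong.dvd
  have hk2 : k < 2 := by
    have h1 : N * k < N * 2 := by
      rw [← hk]
      linarith [hβle, hone γ, hNgt]
    exact lt_of_mul_lt_mul_left h1 hNpos.le
  have hkm2 : -2 < k := by
    have h1 : N * (-2) < N * k := by
      rw [← hk]
      linarith [hone β, hγle, hNgt, hAle]
    exact lt_of_mul_lt_mul_left h1 hNpos.le
  interval_cases k
  · -- k = -1 : (Q-1)a = Q^β - Q^γ + N
    exfalso
    have hA : (Q - 1) * a = Q ^ β - Q ^ γ + N := by linarith [hk]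
    -- first, n = 3 by size
    have hn3 : n = 3 := by
      by_contra h
      have hn4 : 4 ≤ n := by omega
      have h1 : 1 + Q + Q ^ 2 ≤ ∑ j ∈ Finset.range (n - 1), Q ^ j :=
        hsum3 (n - 1) (by omega)
      have h2 : (Q - 1) * a ≥ (1 + Q + Q ^ 2) + 1 := by
        rw [hA, hNsplit]
        linarith [hone β, hγle]
      have h3 : (Q - 1) ^ 2 = Q ^ 2 - 2 * Q + 1 := by ring
      linarith [hAle]
    -- now divisibility mod (Q - 1)
    have hNn : N = 1 + Q + Q ^ 2 := by
      rw [hN, hn3]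
      simp [Finset.sum_range_succ]
    have hQ1 : Q ≡ 1 [ZMOD Q - 1] := Int.ModEq.symm (Int.modEq_iff_dvd.mpr ⟨1, by ring⟩)
    have hb : Q ^ β ≡ 1 [ZMOD Q - 1] := by simpa using hQ1.pow β
    have hg : Q ^ γ ≡ 1 [ZMOD Q - 1] := by simpa using hQ1.pow γ
    have hq2 : Q ^ 2 ≡ 1 [ZMOD Q - 1] := by simpa using hQ1.pow 2
    have hNmod : N ≡ 3 [ZMOD Q - 1] := by
      have h := ((Int.ModEq.refl 1).add hQ1).add hq2
      rw [hNn]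
      have h3 : (1 : ℤ) + 1 + 1 = 3 := by norm_num
      exact h3 ▸ h
    have h := (hb.sub hg).add hNmod
    rw [← hA] at h
    have h0 : (Q - 1) * a ≡ 0 [ZMOD Q - 1] :=
      (Int.modEq_zero_iff_dvd).mpr ⟨(a : ℤ), rfl⟩
    have hdvd : (Q - 1) ∣ 3 := by
      have hd := (h0.symm.trans h).dvd
      norm_num at hd
      exact hd
    have h2dvd : (2 : ℤ) ∣ Q - 1 := by
      obtain ⟨c, hc⟩ := hqodd
      have hcz : Q = 2 * c + 1 := by rw [hQ]; exact_mod_cast hc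
      exact ⟨c, by omega⟩
    have := h2dvd.trans hdvd
    norm_num at this
  · -- k = 0 : (Q-1)a = Q^β - Q^γ
    have hA : (Q - 1) * a = Q ^ β - Q ^ γ := by linarith [hk]
    rcases Nat.eq_zero_or_pos a with h0 | hapos
    · exact Or.inl h0
    right
    have haz1 : (1 : ℤ) ≤ (a : ℤ) := by exact_mod_cast hapos
    have hApos : 0 < (Q - 1) * a :=
      mul_pos (by linarith) (by exact_mod_cast hapos)
    have hγβ : γ < β := by
      have h : Q ^ γ < Q ^ β := by linarith
      exact (pow_lt_pow_iff_right₀ (by linarith : (1:ℤ) < Q)).mp h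
    have hsplitp : Q ^ β = Q ^ γ * Q ^ (β - γ) := by
      rw [← pow_add]; congr 1; omega
    have hQbg : Q ≤ Q ^ (β - γ) := by
      have := hpow_le 1 (β - γ) (by omega)
      simpa using this
    have hγ0 : γ = 0 := by
      by_contra h
      have h1 : Q ≤ Q ^ γ := by
        have := hpow_le 1 γ (by omega)
        simpa using this
      have e1 : Q ^ γ * Q ≤ Q ^ γ * Q ^ (β - γ) :=
        mul_le_mul_of_nonneg_left hQbg (hpow_pos γ).le
      have e2 : (Q - 1) * a = Q ^ γ * Q ^ (β - γ) - Q ^ γ := by rw [hA, hsplitp]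
      have e4 : Q * (Q - 1) ≤ Q ^ γ * (Q - 1) :=
        mul_le_mul_of_nonneg_right h1 (by linarith)
      have key : Q * (Q - 1) ≤ (Q - 1) ^ 2 := by
        calc Q * (Q - 1) ≤ Q ^ γ * (Q - 1) := e4
          _ = Q ^ γ * Q - Q ^ γ := by ring
          _ ≤ Q ^ γ * Q ^ (β - γ) - Q ^ γ := by linarith [e1]
          _ = (Q - 1) * a := e2.symm
          _ ≤ (Q - 1) ^ 2 := hAle
      have expand : Q * (Q - 1) - (Q - 1) ^ 2 = Q - 1 := by ring
      linarith
    have hβ1 : β = 1 := by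
      have hA' : (Q - 1) * a = Q ^ β - 1 := by rw [hA, hγ0]; norm_num
      have expand : (Q - 1) ^ 2 = Q ^ 2 - 2 * Q + 1 := by ring
      have hlt : Q ^ β < Q ^ 2 := by linarith [hAle]
      have hb2 : β < 2 := (pow_lt_pow_iff_right₀ (by linarith : (1:ℤ) < Q)).mp hlt
      omega
    rw [hγ0, hβ1] at hA
    have hA' : (Q - 1) * (a : ℤ) = (Q - 1) * 1 := by
      rw [hA]; ring
    have := mul_left_cancel₀ (by linarith : (Q - 1) ≠ 0) hA'
    exact_mod_cast this
  · -- k = 1 : (Q-1)a = Q^β - Q^γ - N < 0, contradiction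
    exfalso
    have hA : (Q - 1) * a = Q ^ β - Q ^ γ - N := by linarith [hk]
    linarith [hβle, hone γ, hNgt, hAnn]
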